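/- With ζ and σ as above (z > 1), σ''(z) = (6σ⁶ + 4σ⁴ζ - zσ³ - 1)/(2σζ²). -/

import Mathlib

open Real intervalIntegral

lemma contf : Continuous (fun t : ℝ => Real.sqrt (t ^ 2 - 1)) := by fun_prop

noncomputable def F (z : ℝ) : ℝ := ∫ t in (1:ℝ)..z, Real.sqrt (t ^ 2 - 1)

lemma F_hasDeriv (z : ℝ) : HasDerivAt F (Real.sqrt (z ^ 2 - 1)) z :=
  intervalIntegral.integral_hasDerivAt_right (contf.intervalIntegrable _ _)
    (contf.stronglyMeasurableAtFilter _ _) contf.continuousAt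

lemma F_pos {z : ℝ} (hz : 1 < z) : 0 < F z := by
  apply intervalIntegral.intervalIntegral_pos_of_pos_on (contf.intervalIntegrable _ _) _ hz
  intro x hx
  have : 0 < x ^ 2 - 1 := by nlinarith [hx.1]
  exact Real.sqrt_pos.mpr this

noncomputable def zeta (z : ℝ) : ℝ :=
  ((3 / 2) * ∫ t in (1:ℝ)..z, Real.sqrt (t ^ 2 - 1)) ^ ((2 : ℝ) / 3)

noncomputable def sigma (z : ℝ) : ℝ := Real.sqrt (zeta z / (z ^ 2 - 1))

lemma zeta_eq (z : ℝ) : zeta z = ((3/2) * F z) ^ ((2:ℝ)/3) := rfl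

lemma zeta_pos {z : ℝ} (hz : 1 < z) : 0 < zeta z := by
  rw [zeta_eq]
  exact Real.rpow_pos_of_pos (by have := F_pos hz; linarith) _

lemma sq_sub_pos {z : ℝ} (hz : 1 < z) : 0 < z ^ 2 - 1 := by nlinarith

lemma sigma_pos {z : ℝ} (hz : 1 < z) : 0 < sigma z :=
  Real.sqrt_pos.mpr (div_pos (zeta_pos hz) (sq_sub_pos hz))

lemma sigma_rel {z : ℝ} (hz : 1 < z) : (sigma z) ^ 2 * (z ^ 2 - 1) = zeta z := by
  have h : (sigma z) ^ 2 = zeta z / (z ^ 2 - 1) := by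
    rw [sigma, sq_sqrt (le_of_lt (div_pos (zeta_pos hz) (sq_sub_pos hz)))]
  rw [h]
  field_simp [ne_of_gt (sq_sub_pos hz)]

lemma sqrt_zeta_eq {z : ℝ} (hz : 1 < z) :
    Real.sqrt (zeta z) = ((3/2) * F z) ^ ((1:ℝ)/3) := by
  have hF : (0:ℝ) ≤ (3/2) * F z := by have := F_pos hz; linarith
  rw [zeta_eq, Real.sqrt_eq_rpow, ← Real.rpow_mul hF]
  norm_num

lemma zeta_hasDeriv {z : ℝ} (hz : 1 < z) : HasDerivAt zeta (1 / sigma z) z := by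
  have hF : (0:ℝ) < (3/2) * F z := by have := F_pos hz; linarith
  have h1 : HasDerivAt (fun w => (3/2) * F w) ((3/2) * Real.sqrt (z ^ 2 - 1)) z :=
    (F_hasDeriv z).const_mul _
  have h2 := h1.rpow_const (p := (2:ℝ)/3) (Or.inl (ne_of_gt hF))
  convert h2 using 1
  · rfl
  have hσeq : sigma z = Real.sqrt (zeta z) / Real.sqrt (z ^ 2 - 1) := by
    rw [sigma, Real.sqrt_div (zeta_pos hz).le]
  have hroot : (0:ℝ) < ((3:ℝ)/2 * F z) ^ ((1:ℝ)/3) := Real.rpow_pos_of_pos hF _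
  have hneg : ((3:ℝ)/2 * F z) ^ ((2:ℝ)/3 - 1) = (((3:ℝ)/2 * F z) ^ ((1:ℝ)/3))⁻¹ := by
    rw [← Real.rpow_neg hF.le]; norm_num
  rw [hσeq, one_div_div, sqrt_zeta_eq hz, hneg]
  have hs : (0:ℝ) < Real.sqrt (z ^ 2 - 1) := Real.sqrt_pos.mpr (sq_sub_pos hz)
  field_simp

lemma sigma_hasDeriv {z : ℝ} (hz : 1 < z) :
    HasDerivAt sigma ((1 - 2 * z * (sigma z) ^ 3) / (2 * zeta z)) z := by
  have hd : (z : ℝ) ^ 2 - 1 ≠ 0 := ne_of_gt (sq_sub_pos hz)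
  have hq : HasDerivAt (fun w => zeta w / (w ^ 2 - 1))
      ((1 / sigma z * (z ^ 2 - 1) - zeta z * (2 * z ^ 1)) / (z ^ 2 - 1) ^ 2) z :=
    (zeta_hasDeriv hz).div ((hasDerivAt_pow 2 z).sub_const 1) hd
  have hqz : zeta z / (z ^ 2 - 1) ≠ 0 :=
    ne_of_gt (div_pos (zeta_pos hz) (sq_sub_pos hz))
  have h := hq.sqrt hqz
  convert h using 1
  · rfl
  have hσ : Real.sqrt (zeta z / (z ^ 2 - 1)) = sigma z := rfl
  rw [hσ]
  have ha : sigma z ≠ 0 := ne_of_gt (sigma_pos hz)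
  rw [← sigma_rel hz]
  field_simp

theorem sigma_second_deriv :
    ∀ z : ℝ, 1 < z →
      deriv (deriv sigma) z
        = (6 * (sigma z) ^ 6 + 4 * (sigma z) ^ 4 * zeta z - z * (sigma z) ^ 3 - 1)
            / (2 * sigma z * (zeta z) ^ 2) := by
  intro z hz
  have hev : ∀ᶠ w in nhds z, deriv sigma w
      = (1 - 2 * w * (sigma w) ^ 3) / (2 * zeta w) := by
    filter_upwards [Ioi_mem_nhds hz] with w hw
    exact (sigma_hasDeriv hw).deriv
  have h1 : deriv (deriv sigma) z
      = deriv (fun w => (1 - 2 * w * (sigma w) ^ 3) / (2 * zeta w)) z :=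
    Filter.EventuallyEq.deriv_eq hev
  have hσ := sigma_hasDeriv hz
  have hζne : (2:ℝ) * zeta z ≠ 0 := by have := zeta_pos hz; positivity
  have hD := ((hasDerivAt_const z (1:ℝ)).sub
      (((hasDerivAt_id z).const_mul (2:ℝ)).mul (hσ.pow 3))).div
      ((zeta_hasDeriv hz).const_mul 2) hζne
  have hval : deriv (fun w => (1 - 2 * w * (sigma w) ^ 3) / (2 * zeta w)) z
      = ((0 - ((2 * 1) * (sigma z) ^ 3
            + (2 * z) * ((3:ℕ) * (sigma z) ^ (3 - 1)
                * ((1 - 2 * z * (sigma z) ^ 3) / (2 * zeta z))))) * (2 * zeta z)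
          - (1 - 2 * z * (sigma z) ^ 3) * (2 * (1 / sigma z))) / (2 * zeta z) ^ 2 :=
    hD.deriv
  rw [h1, hval]
  have ha : sigma z ≠ 0 := ne_of_gt (sigma_pos hz)
  have hd : (z : ℝ) ^ 2 - 1 ≠ 0 := ne_of_gt (sq_sub_pos hz)
  rw [← sigma_rel hz]
  field_simp
  ring
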